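/- Let a and b be 2×2 complex matrices with a = √(σ/3)·diag(1, -1) and b = √(σ/3)·[[-1/2, √3/2],[√3/2, 1/2]] for σ ≠ 0, and c = -a - b. Then a+b+c = 0, a²+b²+c² = σI₂, a³+b³+c³ = 0, and (ab - ba)² = -σ²/3·I₂ ≠ 0, so a, b, c are not simultaneously triangularizable. -/
import Mathlib

set_option maxHeartbeats 1000000 in
theorem stmt11 (σ s t : ℂ) (hσ : σ ≠ 0) (hs : s ^ 2 = σ / 3) (ht : t ^ 2 = 3)
    (a b c : Matrix (Fin 2) (Fin 2) ℂ)
    (ha : a = s • !![1, 0; 0, -1])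
    (hb : b = s • !![-(1 / 2), t / 2; t / 2, 1 / 2])
    (hc : c = -a - b) :
    a + b + c = 0 ∧
    a ^ 2 + b ^ 2 + c ^ 2 = σ • (1 : Matrix (Fin 2) (Fin 2) ℂ) ∧
    a ^ 3 + b ^ 3 + c ^ 3 = 0 ∧
    (a * b - b * a) ^ 2 = (-(σ ^ 2) / 3) • (1 : Matrix (Fin 2) (Fin 2) ℂ) ∧
    (a * b - b * a) ^ 2 ≠ 0 ∧
    ¬ ∃ P : Matrix (Fin 2) (Fin 2) ℂ, IsUnit P.det ∧
      ∀ m ∈ ({a, b, c} : Set (Matrix (Fin 2) (Fin 2) ℂ)),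
        ∀ i j : Fin 2, j < i → (P⁻¹ * m * P) i j = 0 := by
  have hs4 : s ^ 4 = σ ^ 2 / 9 := by rw [show s^4 = (s^2)^2 by ring, hs]; ring
  have hσ3 : -(σ ^ 2) / 3 ≠ 0 := by
    simp only [ne_eq, div_eq_zero_iff, neg_eq_zero, pow_eq_zero_iff]
    exact fun h => by simp at h; exact absurd h hσ
  have h1 : a + b + c = 0 := by rw [hc]; abel
  have h2 : a ^ 2 + b ^ 2 + c ^ 2 = σ • (1 : Matrix (Fin 2) (Fin 2) ℂ) := by
    rw [hc, ha, hb]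
    ext i j
    fin_cases i <;> fin_cases j <;>
      simp [pow_succ, Matrix.mul_apply, Fin.sum_univ_two, Matrix.one_apply] <;>
      ring_nf <;> simp only [ht, hs, hs4] <;> ring_nf
  have h3 : a ^ 3 + b ^ 3 + c ^ 3 = 0 := by
    rw [hc, ha, hb]
    ext i j
    fin_cases i <;> fin_cases j <;>
      simp [pow_succ, Matrix.mul_apply, Fin.sum_univ_two, Matrix.one_apply] <;>
      ring_nf <;> simp only [ht, hs, hs4] <;> ring_nf
  have h4 : (a * b - b * a) ^ 2 = (-(σ ^ 2) / 3) • (1 : Matrix (Fin 2) (Fin 2) ℂ) := by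
    rw [ha, hb]
    ext i j
    fin_cases i <;> fin_cases j <;>
      simp [pow_succ, Matrix.mul_apply, Fin.sum_univ_two, Matrix.one_apply] <;>
      ring_nf <;> simp only [ht, hs, hs4] <;> ring_nf
  have h5 : (a * b - b * a) ^ 2 ≠ 0 := by
    rw [h4]
    intro h
    have := congrFun (congrFun h 0) 0
    simp [Matrix.one_apply] at this
    exact hσ3 (by simpa using this)
  refine ⟨h1, h2, h3, h4, h5, ?_⟩
  rintro ⟨P, hP, hT⟩
  have hinv : P * P⁻¹ = 1 := Matrix.mul_nonsing_inv P hP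
  have hinv' : P⁻¹ * P = 1 := Matrix.nonsing_inv_mul P hP
  have hmid : ∀ z : Matrix (Fin 2) (Fin 2) ℂ, P * (P⁻¹ * z) = z := fun z => by
    rw [← Matrix.mul_assoc, hinv, Matrix.one_mul]
  have hA : (P⁻¹ * a * P) 1 0 = 0 := hT a (by simp) 1 0 (by decide)
  have hB : (P⁻¹ * b * P) 1 0 = 0 := hT b (by simp) 1 0 (by decide)
  set A := P⁻¹ * a * P with hAdef
  set B := P⁻¹ * b * P with hBdef
  have hcomm : P⁻¹ * (a * b - b * a) * P = A * B - B * A := by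
    rw [hAdef, hBdef]
    simp only [Matrix.mul_sub, Matrix.sub_mul]
    congr 1 <;> simp [Matrix.mul_assoc, hmid]
  have hD2 : (A * B - B * A) * (A * B - B * A) = (-(σ ^ 2) / 3) • 1 := by
    rw [← hcomm]
    have : P⁻¹ * (a * b - b * a) * P * (P⁻¹ * (a * b - b * a) * P)
        = P⁻¹ * (a * b - b * a) ^ 2 * P := by
      rw [pow_two]; simp [Matrix.mul_assoc, hmid]
    rw [this, h4, Matrix.mul_smul, Matrix.smul_mul, Matrix.mul_one, hinv']
  have hzero : ((A * B - B * A) * (A * B - B * A)) 0 0 = 0 := by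
    simp [Matrix.mul_apply, Fin.sum_univ_two, hA, hB]
    ring
  rw [hD2] at hzero
  simp [Matrix.one_apply] at hzero
  exact hσ3 (by simpa using hzero)
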